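/- Let Λ = (λ_0,…,λ_n) ∈ ℂ^{n+1} and assume that E_Λ is closed under complex conjugation. Then for real numbers a < b the following are equivalent: (a) E_Λ is an extended Chebyshev system over the closed interval [a,b]; (b) E_Λ is an extended Chebyshev system for every two-point set {a,x} with x ∈ (a,b]; (c) for each k = 0,…,n, the function x ↦ Φ_{n,k}(x−a) has no zeros in (a,b]. -/

import Mathlib

open Filter Topology Set

noncomputable section

/-- The differential operator `(d/dx − λ₀)⋯(d/dx − λₙ)` applied to `f`,
where `λ₀,…,λₙ` are the entries of the list. -/
def LOp : List ℂ → (ℝ → ℂ) → (ℝ → ℂ)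
  | [], f => f
  | c :: r, f => LOp r (fun x => deriv f x - c * f x)

/-- The space `E_Λ` of exponential polynomials with eigenvalue vector `l`. -/
def ExpPoly (l : List ℂ) : Set (ℝ → ℂ) :=
  {f | ContDiff ℝ (⊤ : ℕ∞) f ∧ LOp l f = 0}

/-- `f` has a zero of order (multiplicity) exactly `k` at `x₀`. -/
def HasZeroOfOrder (f : ℝ → ℂ) (x₀ : ℝ) (k : ℕ) : Prop :=
  (∀ j < k, iteratedDeriv j f x₀ = 0) ∧ iteratedDeriv k f x₀ ≠ 0

/-- `E_l` (with `l.length = n + 1`) is an extended Chebyshev system for `A ⊆ ℝ`: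
every nonzero member has at most `n` zeros in `A`, counted with multiplicity. -/
def IsExtChebyshev (l : List ℂ) (A : Set ℝ) : Prop :=
  ∀ f ∈ ExpPoly l, f ≠ 0 → ∀ (s : Finset ℝ) (m : ℝ → ℕ),
    (↑s : Set ℝ) ⊆ A → (∀ x ∈ s, ∀ j < m x, iteratedDeriv j f x = 0) →
    ∑ x ∈ s, m x ≤ l.length - 1

/-- `p k`, `k = 0,…,n` (with `l.length = n + 1`) is the normalized Bernstein basis of
`E_l` for the points `a ≠ b`: `p k` lies in `E_l`, has a zero of order exactly `k`
at `a`, a zero of order exactly `n − k` at `b`, and `(p k)^{(k)}(a) = 1`. -/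
def IsBernsteinBasis (l : List ℂ) (a b : ℝ) (p : ℕ → ℝ → ℂ) : Prop :=
  ∀ k ≤ l.length - 1,
    p k ∈ ExpPoly l ∧ HasZeroOfOrder (p k) a k ∧
      HasZeroOfOrder (p k) b (l.length - 1 - k) ∧ iteratedDeriv k (p k) a = 1

/-- `E_l` is closed under (pointwise) complex conjugation. -/
def ConjClosed (l : List ℂ) : Prop :=
  ∀ f ∈ ExpPoly l, (fun x => starRingEnd ℂ (f x)) ∈ ExpPoly l


/-! ### Auxiliary lemmas -/

variable {F G : Type*} [NormedAddCommGroup F] [NormedSpace ℝ F]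
  [NormedAddCommGroup G] [NormedSpace ℝ G]

lemma one_le_inftop : ((⊤ : ℕ∞) : WithTop ℕ∞) ≠ 0 := by
  simp

lemma nat_le_inftop (m : ℕ) : (m : WithTop ℕ∞) ≤ ((⊤ : ℕ∞) : WithTop ℕ∞) := by
  exact_mod_cast (le_top : ((m:ℕ∞)) ≤ ⊤)

lemma Smooth.cmul {c : ℂ} {f : ℝ → ℂ} (hf : ContDiff ℝ (⊤:ℕ∞) f) :
    ContDiff ℝ (⊤:ℕ∞) (fun y => c * f y) := hf.const_smul c

lemma Smooth.deriv' {f : ℝ → F} (hf : ContDiff ℝ (⊤:ℕ∞) f) :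
    ContDiff ℝ (⊤:ℕ∞) (deriv f) := (contDiff_infty_iff_deriv.mp hf).2

lemma Smooth.iteratedDeriv {f : ℝ → F} (hf : ContDiff ℝ (⊤:ℕ∞) f) (m : ℕ) :
    ContDiff ℝ (⊤:ℕ∞) (iteratedDeriv m f) := by
  rw [iteratedDeriv_eq_iterate]; exact hf.iterate_deriv m

lemma Smooth.differentiable {f : ℝ → F} (hf : ContDiff ℝ (⊤:ℕ∞) f) :
    Differentiable ℝ f := hf.differentiable one_le_inftop

lemma iteratedDeriv_clm_comp (g : F →L[ℝ] G) {f : ℝ → F} (hf : ContDiff ℝ (⊤:ℕ∞) f) (m : ℕ) :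
    iteratedDeriv m (fun x => g (f x)) = fun x => g (iteratedDeriv m f x) := by
  induction m with
  | zero => simp
  | succ m IH =>
    rw [iteratedDeriv_succ, iteratedDeriv_succ, IH]
    funext x
    exact (g.hasFDerivAt.comp_hasDerivAt x
      ((Smooth.iteratedDeriv hf m).differentiable one_le_inftop x).hasDerivAt).deriv

lemma EqOn.iteratedDeriv_of_isOpen {f g : ℝ → F} {U : Set ℝ} (hU : IsOpen U)
    (h : Set.EqOn f g U) (m : ℕ) :
    Set.EqOn (iteratedDeriv m f) (iteratedDeriv m g) U := fun _ hx =>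
  Filter.EventuallyEq.iteratedDeriv_eq m (Filter.eventuallyEq_of_mem (hU.mem_nhds hx) h)

lemma iteratedDeriv_cmul {c : ℂ} {f : ℝ → ℂ} (hf : ContDiff ℝ (⊤:ℕ∞) f) (m : ℕ) (x : ℝ) :
    iteratedDeriv m (fun y => c * f y) x = c * iteratedDeriv m f x := by
  have h0 : (fun y => c * f y) = c • f := by funext y; simp [smul_eq_mul]
  rw [h0, ← iteratedDerivWithin_univ, ← iteratedDerivWithin_univ,
    iteratedDerivWithin_const_smul (Set.mem_univ x) uniqueDiffOn_univ c (hf.of_le (nat_le_inftop m)).contDiffWithinAt]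
  simp

lemma iteratedDeriv_fun_addC {f g : ℝ → ℂ} (hf : ContDiff ℝ (⊤:ℕ∞) f)
    (hg : ContDiff ℝ (⊤:ℕ∞) g) (m : ℕ) (x : ℝ) :
    iteratedDeriv m (fun y => f y + g y) x = iteratedDeriv m f x + iteratedDeriv m g x := by
  have : (fun y => f y + g y) = f + g := rfl
  rw [this, ← iteratedDerivWithin_univ, ← iteratedDerivWithin_univ, ← iteratedDerivWithin_univ,
    iteratedDerivWithin_add (Set.mem_univ x) uniqueDiffOn_univ (hf.of_le (nat_le_inftop m)).contDiffWithinAt (hg.of_le (nat_le_inftop m)).contDiffWithinAt]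

lemma iteratedDeriv_zero_fun (m : ℕ) : iteratedDeriv m (fun _ : ℝ => (0:ℂ)) = fun _ => 0 := by
  induction m with
  | zero => simp
  | succ m IH =>
    rw [iteratedDeriv_succ']
    have : deriv (fun _ : ℝ => (0:ℂ)) = fun _ => (0:ℂ) := by funext x; simp
    rw [this]; exact IH

lemma iteratedDeriv_sum' {ι : Type*} (s : Finset ι) (c : ι → ℂ) (F : ι → ℝ → ℂ)
    (hF : ∀ i ∈ s, ContDiff ℝ (⊤:ℕ∞) (F i)) (m : ℕ) (x : ℝ) :
    iteratedDeriv m (fun y => ∑ i ∈ s, c i * F i y) x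
      = ∑ i ∈ s, c i * iteratedDeriv m (F i) x := by
  classical
  induction s using Finset.induction with
  | empty => simp [iteratedDeriv_zero_fun]
  | insert a s hni IH =>
    have hsum : ContDiff ℝ (⊤:ℕ∞) (fun y => ∑ i ∈ s, c i * F i y) := by
      apply ContDiff.sum
      intro i hi
      exact Smooth.cmul (hF i (Finset.mem_insert_of_mem hi))
    have h1 : (fun y => ∑ i ∈ insert a s, c i * F i y)
        = fun y => c a * F a y + ∑ i ∈ s, c i * F i y := by
      funext y; rw [Finset.sum_insert hni]
    rw [h1, iteratedDeriv_fun_addC (Smooth.cmul (hF a (Finset.mem_insert_self a s))) hsum,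
      iteratedDeriv_cmul (hF a (Finset.mem_insert_self a s)),
      IH (fun i hi => hF i (Finset.mem_insert_of_mem hi)), Finset.sum_insert hni]

lemma iteratedDeriv_comp_sub_const' (m : ℕ) (f : ℝ → ℂ) (a : ℝ) :
    iteratedDeriv m (fun x => f (x - a)) = fun x => iteratedDeriv m f (x - a) := by
  simpa [sub_eq_add_neg] using iteratedDeriv_comp_add_const m f (-a)

lemma iteratedDeriv_iteratedDeriv (f : ℝ → ℂ) (j i : ℕ) :
    iteratedDeriv i (iteratedDeriv j f) = iteratedDeriv (j + i) f := by
  induction i with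
  | zero => simp
  | succ i IH => rw [iteratedDeriv_succ, IH, ← iteratedDeriv_succ]; rfl

lemma iteratedDeriv_fun_subC {f g : ℝ → ℂ} (hf : ContDiff ℝ (⊤:ℕ∞) f)
    (hg : ContDiff ℝ (⊤:ℕ∞) g) (m : ℕ) (x : ℝ) :
    iteratedDeriv m (fun y => f y - g y) x = iteratedDeriv m f x - iteratedDeriv m g x := by
  have : (fun y => f y - g y) = f - g := rfl
  rw [this, ← iteratedDerivWithin_univ, ← iteratedDerivWithin_univ, ← iteratedDerivWithin_univ,
    iteratedDerivWithin_sub (Set.mem_univ x) uniqueDiffOn_univ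
      (hf.of_le (nat_le_inftop m)).contDiffWithinAt (hg.of_le (nat_le_inftop m)).contDiffWithinAt]

lemma iteratedDeriv_cmul' {c : ℂ} {f : ℝ → ℂ} (hf : ContDiff ℝ (⊤:ℕ∞) f) (m : ℕ) (x : ℝ) :
    iteratedDeriv m (fun y => c * f y) x = c * iteratedDeriv m f x := by
  have h0 : (fun y => c * f y) = c • f := by funext y; simp [smul_eq_mul]
  rw [h0, ← iteratedDerivWithin_univ, ← iteratedDerivWithin_univ,
    iteratedDerivWithin_const_smul (Set.mem_univ x) uniqueDiffOn_univ c
      (hf.of_le (nat_le_inftop m)).contDiffWithinAt]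
  simp

-- smoothness of the auxiliary function in LOp recursion
lemma Smooth.lopStep {c : ℂ} {f : ℝ → ℂ} (hf : ContDiff ℝ (⊤:ℕ∞) f) :
    ContDiff ℝ (⊤:ℕ∞) (fun x => deriv f x - c * f x) :=
  (Smooth.deriv' hf).sub (Smooth.cmul hf)

lemma LOp_deriv : ∀ (l : List ℂ) (f : ℝ → ℂ), ContDiff ℝ (⊤:ℕ∞) f →
    LOp l (deriv f) = deriv (LOp l f)
  | [], _, _ => rfl
  | c :: r, f, hf => by
    have hg : ContDiff ℝ (⊤:ℕ∞) (fun x => deriv f x - c * f x) := Smooth.lopStep hf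
    have h1 : (fun x => deriv (deriv f) x - c * deriv f x)
        = deriv (fun x => deriv f x - c * f x) := by
      funext x
      rw [deriv_fun_sub ((Smooth.deriv' hf).differentiable one_le_inftop x)
        ((Smooth.cmul hf).differentiable one_le_inftop x),
        deriv_const_mul c (hf.differentiable one_le_inftop x)]
    show LOp r (fun x => deriv (deriv f) x - c * deriv f x) = deriv (LOp r _)
    rw [h1]
    exact LOp_deriv r _ hg

lemma LOp_zero_fun : ∀ (l : List ℂ), LOp l (fun _ => (0:ℂ)) = fun _ => 0
  | [] => rfl
  | c :: r => by
    show LOp r (fun x => deriv (fun _ => (0:ℂ)) x - c * 0) = _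
    have : (fun x : ℝ => deriv (fun _ => (0:ℂ)) x - c * 0) = fun _ => (0:ℂ) := by
      funext x; simp
    rw [this]; exact LOp_zero_fun r

lemma ExpPoly.deriv_mem {l : List ℂ} {f : ℝ → ℂ} (hf : f ∈ ExpPoly l) :
    deriv f ∈ ExpPoly l := by
  refine ⟨Smooth.deriv' hf.1, ?_⟩
  rw [LOp_deriv l f hf.1, hf.2]
  funext x
  show deriv (fun _ => (0:ℂ)) x = 0
  simp

lemma ExpPoly.iteratedDeriv_mem {l : List ℂ} {f : ℝ → ℂ} (hf : f ∈ ExpPoly l) (m : ℕ) :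
    iteratedDeriv m f ∈ ExpPoly l := by
  induction m with
  | zero => simpa using hf
  | succ m IH => rw [iteratedDeriv_succ]; exact ExpPoly.deriv_mem IH

lemma LOp_comp_sub : ∀ (l : List ℂ) (f : ℝ → ℂ), ContDiff ℝ (⊤:ℕ∞) f → ∀ (a : ℝ),
    LOp l (fun x => f (x - a)) = fun x => (LOp l f) (x - a)
  | [], _, _, _ => rfl
  | c :: r, f, hf, a => by
    have h1 : (fun x => deriv (fun y => f (y - a)) x - c * f (x - a))
        = fun x => (fun y => deriv f y - c * f y) (x - a) := by
      funext x
      rw [deriv_comp_sub_const]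
    show LOp r _ = _
    rw [h1, LOp_comp_sub r _ (Smooth.lopStep hf) a]
    rfl

lemma ExpPoly.translate {l : List ℂ} {f : ℝ → ℂ} (hf : f ∈ ExpPoly l) (a : ℝ) :
    (fun x => f (x - a)) ∈ ExpPoly l := by
  refine ⟨hf.1.comp ((contDiff_id (E := ℝ)).sub contDiff_const), ?_⟩
  rw [LOp_comp_sub l f hf.1 a, hf.2]
  funext x; rfl

lemma LOp_add : ∀ (l : List ℂ) (f g : ℝ → ℂ), ContDiff ℝ (⊤:ℕ∞) f → ContDiff ℝ (⊤:ℕ∞) g →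
    LOp l (fun x => f x + g x) = fun x => LOp l f x + LOp l g x
  | [], _, _, _, _ => rfl
  | c :: r, f, g, hf, hg => by
    have h1 : (fun x => deriv (fun y => f y + g y) x - c * (f x + g x))
        = fun x => (deriv f x - c * f x) + (deriv g x - c * g x) := by
      funext x
      rw [deriv_fun_add (hf.differentiable one_le_inftop x) (hg.differentiable one_le_inftop x)]
      ring
    show LOp r _ = _
    rw [h1, LOp_add r _ _ (Smooth.lopStep hf) (Smooth.lopStep hg)]
    rfl

lemma LOp_cmul : ∀ (l : List ℂ) (f : ℝ → ℂ) (c₀ : ℂ), ContDiff ℝ (⊤:ℕ∞) f →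
    LOp l (fun x => c₀ * f x) = fun x => c₀ * LOp l f x
  | [], _, _, _ => rfl
  | c :: r, f, c₀, hf => by
    have h1 : (fun x => deriv (fun y => c₀ * f y) x - c * (c₀ * f x))
        = fun x => c₀ * (deriv f x - c * f x) := by
      funext x
      rw [deriv_const_mul c₀ (hf.differentiable one_le_inftop x)]
      ring
    show LOp r _ = _
    rw [h1, LOp_cmul r _ c₀ (Smooth.lopStep hf)]
    rfl

lemma ExpPoly.zero_mem (l : List ℂ) : (0 : ℝ → ℂ) ∈ ExpPoly l :=
  ⟨contDiff_const, by have := LOp_zero_fun l; convert this <;> rfl⟩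

lemma ExpPoly.sum_mem {l : List ℂ} {ι : Type*} (s : Finset ι) (c : ι → ℂ) (F : ι → ℝ → ℂ)
    (hF : ∀ i ∈ s, F i ∈ ExpPoly l) :
    (fun x => ∑ i ∈ s, c i * F i x) ∈ ExpPoly l := by
  classical
  induction s using Finset.induction with
  | empty => simp only [Finset.sum_empty]; exact ExpPoly.zero_mem l
  | insert a s hni IH =>
    have ha := hF a (Finset.mem_insert_self a s)
    have hs : (fun x => ∑ i ∈ s, c i * F i x) ∈ ExpPoly l :=
      IH (fun i hi => hF i (Finset.mem_insert_of_mem hi))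
    have h1 : (fun x => ∑ i ∈ insert a s, c i * F i x)
        = fun x => (c a * F a x) + ∑ i ∈ s, c i * F i x := by
      funext x; rw [Finset.sum_insert hni]
    rw [h1]
    have hca : (fun x => c a * F a x) ∈ ExpPoly l := by
      refine ⟨Smooth.cmul ha.1, ?_⟩
      rw [LOp_cmul l _ _ ha.1, ha.2]
      funext x; simp
    refine ⟨hca.1.add hs.1, ?_⟩
    rw [LOp_add l _ _ hca.1 hs.1, hca.2, hs.2]
    funext x; simp

/-- first-order uniqueness -/
lemma firstOrder_eq_zero {f : ℝ → ℂ} (hf : Differentiable ℝ f) (c : ℂ)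
    (hd : ∀ x, deriv f x = c * f x) {x₀ : ℝ} (h0 : f x₀ = 0) : f = 0 := by
  set F : ℝ → ℂ := fun x => Complex.exp (-(c * x)) * f x with hF
  have hE : ∀ x : ℝ, HasDerivAt (fun y : ℝ => Complex.exp (-(c * y)))
      (Complex.exp (-(c * x)) * (-c)) x := by
    intro x
    have h1 : HasDerivAt (fun y : ℝ => -(c * (y:ℂ))) (-c) x := by
      have := (Complex.ofRealCLM.hasDerivAt (x := x)).const_mul c
      simpa using this.fun_neg
    simpa using h1.cexp
  have hdF : ∀ x, HasDerivAt F 0 x := by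
    intro x
    have := (hE x).fun_mul (hf x).hasDerivAt
    rw [hd x] at this
    convert this using 1
    · rfl
    ring
  have hFconst : ∀ x, F x = F x₀ := by
    intro x
    exact is_const_of_deriv_eq_zero (fun y => (hdF y).differentiableAt)
      (fun y => (hdF y).deriv) x x₀
  funext x
  have := hFconst x
  rw [hF] at this
  simp only [h0, mul_zero] at this
  have hexp := Complex.exp_ne_zero (-(c * x))
  exact (mul_eq_zero.mp this).resolve_left hexp

/-- Uniqueness: a solution with vanishing Cauchy data is zero. -/
lemma expPoly_unique : ∀ (l : List ℂ) (f : ℝ → ℂ), ContDiff ℝ (⊤:ℕ∞) f → LOp l f = 0 →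
    ∀ (x₀ : ℝ), (∀ j < l.length, iteratedDeriv j f x₀ = 0) → f = 0
  | [], f, _, h0, _, _ => h0
  | c :: r, f, hf, h0, x₀, hv => by
    set g : ℝ → ℂ := fun x => deriv f x - c * f x with hgdef
    have hg : ContDiff ℝ (⊤:ℕ∞) g := Smooth.lopStep hf
    have hLg : LOp r g = 0 := h0
    have hvg : ∀ j < r.length, iteratedDeriv j g x₀ = 0 := by
      intro j hj
      have h1 : iteratedDeriv j g x₀
          = iteratedDeriv j (deriv f) x₀ - c * iteratedDeriv j f x₀ := by
        rw [hgdef]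
        rw [iteratedDeriv_fun_subC (Smooth.deriv' hf) (Smooth.cmul hf) j x₀,
          iteratedDeriv_cmul' hf j x₀]
      rw [h1, ← iteratedDeriv_succ']
      rw [hv (j+1) (by simpa using Nat.succ_lt_succ hj), hv j (by
        simp only [List.length_cons]
        omega)]
      simp
    have hgz : g = 0 := expPoly_unique r g hg hLg x₀ hvg
    have hd : ∀ x, deriv f x = c * f x := by
      intro x
      have : g x = 0 := by rw [hgz]; rfl
      rw [hgdef] at this
      simpa [sub_eq_zero] using this
    exact firstOrder_eq_zero (hf.differentiable one_le_inftop) c hd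
      (by have := hv 0 (by simp); simpa using this)

/-! ### chunk 3 -/

lemma ExpPoly.sub_mem {l : List ℂ} {f g : ℝ → ℂ} (hf : f ∈ ExpPoly l) (hg : g ∈ ExpPoly l) :
    (fun x => f x - g x) ∈ ExpPoly l := by
  refine ⟨hf.1.sub hg.1, ?_⟩
  have h1 : (fun x => f x - g x) = fun x => f x + (-1:ℂ) * g x := by funext x; ring
  rw [h1, LOp_add l _ _ hf.1 (Smooth.cmul hg.1), LOp_cmul l _ _ hg.1, hf.2, hg.2]
  funext x; simp

lemma iteratedDeriv_conj {f : ℝ → ℂ} (hf : ContDiff ℝ (⊤:ℕ∞) f) (m : ℕ) :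
    iteratedDeriv m (fun x => (starRingEnd ℂ) (f x)) =
      fun x => (starRingEnd ℂ) (iteratedDeriv m f x) := by
  have hC : ∀ z : ℂ, Complex.conjCLE.toContinuousLinearMap z = (starRingEnd ℂ) z := by
    intro z; simp [Complex.conjCLE]
  have := iteratedDeriv_clm_comp (Complex.conjCLE.toContinuousLinearMap) hf m
  simp only [hC] at this
  exact this

lemma iteratedDeriv_re {f : ℝ → ℂ} (hf : ContDiff ℝ (⊤:ℕ∞) f) (m : ℕ) :
    iteratedDeriv m (fun x => (f x).re) = fun x => (iteratedDeriv m f x).re := by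
  have := iteratedDeriv_clm_comp (Complex.reCLM) hf m
  simpa using this

section Main

variable {n : ℕ} {l : List ℂ} {Φ : ℝ → ℂ}

/-- All iterated derivatives of `Φ` are real. -/
lemma phi_conj (hl : l.length = n + 1) (hconj : ConjClosed l)
    (hΦmem : Φ ∈ ExpPoly l) (hΦzero : ∀ j < n, iteratedDeriv j Φ 0 = 0)
    (hΦnorm : iteratedDeriv n Φ 0 = 1) :
    ∀ (r : ℕ) (t : ℝ), (starRingEnd ℂ) (iteratedDeriv r Φ t) = iteratedDeriv r Φ t := by
  have hcf : (fun x => (starRingEnd ℂ) (Φ x)) ∈ ExpPoly l := hconj Φ hΦmem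
  have hdiff : (fun x => (starRingEnd ℂ) (Φ x) - Φ x) ∈ ExpPoly l :=
    ExpPoly.sub_mem hcf hΦmem
  have hvan : ∀ j < l.length, iteratedDeriv j (fun x => (starRingEnd ℂ) (Φ x) - Φ x) 0 = 0 := by
    intro j hj
    rw [iteratedDeriv_fun_subC hcf.1 hΦmem.1, iteratedDeriv_conj hΦmem.1]
    rcases Nat.lt_or_ge j n with h | h
    · simp [hΦzero j h]
    · have hjn : j = n := by rw [hl] at hj; omega
      subst hjn
      simp [hΦnorm]
  have h0 : (fun x => (starRingEnd ℂ) (Φ x) - Φ x) = 0 :=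
    expPoly_unique l _ hdiff.1 hdiff.2 0 hvan
  have hΦreal : ∀ x, (starRingEnd ℂ) (Φ x) = Φ x := by
    intro x
    have := congrFun h0 x
    simpa [sub_eq_zero] using this
  intro r t
  have h1 : (fun x => (starRingEnd ℂ) (Φ x)) = Φ := funext hΦreal
  calc (starRingEnd ℂ) (iteratedDeriv r Φ t)
      = iteratedDeriv r (fun x => (starRingEnd ℂ) (Φ x)) t := by
        rw [iteratedDeriv_conj hΦmem.1]
    _ = iteratedDeriv r Φ t := by rw [h1]

lemma phi_smooth_shift (hΦ : ContDiff ℝ (⊤:ℕ∞) Φ) (i : ℕ) (a : ℝ) :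
    ContDiff ℝ (⊤:ℕ∞) (fun x => iteratedDeriv i Φ (x - a)) :=
  (Smooth.iteratedDeriv hΦ i).comp ((contDiff_id (E := ℝ)).sub contDiff_const)

lemma phi_shift_deriv (Φ : ℝ → ℂ) (i j : ℕ) (a : ℝ) :
    iteratedDeriv j (fun x => iteratedDeriv i Φ (x - a))
      = fun x => iteratedDeriv (i + j) Φ (x - a) := by
  rw [iteratedDeriv_comp_sub_const', iteratedDeriv_iteratedDeriv]

/-- derivative of a combination -/
lemma combo_deriv (hΦ : ContDiff ℝ (⊤:ℕ∞) Φ) {k : ℕ} (c : Fin (k+1) → ℂ) (a : ℝ)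
    (j : ℕ) (y : ℝ) :
    iteratedDeriv j (fun x => ∑ i : Fin (k+1), c i * iteratedDeriv (i:ℕ) Φ (x - a)) y
      = ∑ i : Fin (k+1), c i * iteratedDeriv ((i:ℕ) + j) Φ (y - a) := by
  rw [iteratedDeriv_sum' Finset.univ c _ (fun i _ => phi_smooth_shift hΦ i a) j y]
  refine Finset.sum_congr rfl fun i _ => ?_
  rw [phi_shift_deriv Φ i j a]

/-- Spanning lemma: an element of `E_l` vanishing to order `n - k` at `a` is a combination
of the first `k+1` derivatives of `Φ` shifted to `a`. -/
lemma span_lemma (hl : l.length = n + 1)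
    (hΦmem : Φ ∈ ExpPoly l) (hΦzero : ∀ j < n, iteratedDeriv j Φ 0 = 0)
    (hΦnorm : iteratedDeriv n Φ 0 = 1)
    {f : ℝ → ℂ} (hf : f ∈ ExpPoly l) (a : ℝ) {k : ℕ} (hk : k ≤ n)
    (h0 : ∀ j < n - k, iteratedDeriv j f a = 0) :
    ∃ c : Fin (k+1) → ℂ,
      f = fun x => ∑ i : Fin (k+1), c i * iteratedDeriv (i:ℕ) Φ (x - a) := by
  classical
  set A : Matrix (Fin (k+1)) (Fin (k+1)) ℂ :=
    Matrix.of fun j i : Fin (k+1) => iteratedDeriv ((i:ℕ) + ((n - k) + j)) Φ 0 with hA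
  have hAzero : ∀ j i : Fin (k+1), (i:ℕ) + (j:ℕ) < k → A j i = 0 := by
    intro j i hij
    apply hΦzero
    omega
  have hAone : ∀ j i : Fin (k+1), (i:ℕ) + (j:ℕ) = k → A j i = 1 := by
    intro j i hij
    have : (i:ℕ) + ((n-k) + j) = n := by omega
    rw [hA]; simpa [this] using hΦnorm
  -- determinant of A is nonzero
  have hdetA : A.det ≠ 0 := by
    set B : Matrix (Fin (k+1)) (Fin (k+1)) ℂ := A.submatrix id Fin.revPerm with hB
    have hrev : ∀ q : Fin (k+1), ((Fin.revPerm q : Fin (k+1)) : ℕ) = k - (q:ℕ) := by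
      intro q
      have : ((q.rev : Fin (k+1)) : ℕ) = (k + 1) - ((q:ℕ) + 1) := Fin.val_rev q
      simpa using this
    have hBlow : B.BlockTriangular OrderDual.toDual := by
      intro p q hpq
      have hlt : p < q := hpq
      have hlt' : (p:ℕ) < (q:ℕ) := hlt
      have hBpq : B p q = A p (Fin.revPerm q) := rfl
      rw [hBpq]
      apply hAzero
      rw [hrev q]
      have := q.is_le
      omega
    have hBdiag : ∀ p : Fin (k+1), B p p = 1 := by
      intro p
      have hBpp : B p p = A p (Fin.revPerm p) := rfl
      rw [hBpp]
      apply hAone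
      rw [hrev p]
      have := p.is_le
      omega
    have hdetB : B.det = 1 := by
      rw [Matrix.det_of_lowerTriangular B hBlow]
      simp [hBdiag]
    have hperm : B.det = (Equiv.Perm.sign (Fin.revPerm : Equiv.Perm (Fin (k+1)))) * A.det := by
      rw [hB]; exact Matrix.det_permute' _ A
    intro hzero
    rw [hzero, mul_zero] at hperm
    rw [hdetB] at hperm
    exact one_ne_zero hperm
  -- solve for the coefficients
  have hunit : IsUnit A.det := isUnit_iff_ne_zero.mpr hdetA
  set v : Fin (k+1) → ℂ := fun j => iteratedDeriv ((n - k) + j) f a with hv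
  set c : Fin (k+1) → ℂ := A⁻¹.mulVec v with hc
  have hsolve : A.mulVec c = v := by
    rw [hc, Matrix.mulVec_mulVec, Matrix.mul_nonsing_inv A hunit, Matrix.one_mulVec]
  refine ⟨c, ?_⟩
  -- the difference is zero by uniqueness
  set F : ℝ → ℂ := fun x => ∑ i : Fin (k+1), c i * iteratedDeriv (i:ℕ) Φ (x - a) with hFdef
  have hFmem : F ∈ ExpPoly l :=
    ExpPoly.sum_mem Finset.univ c _ (fun i _ =>
      ExpPoly.translate (ExpPoly.iteratedDeriv_mem hΦmem (i:ℕ)) a)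
  have hg : (fun x => f x - F x) ∈ ExpPoly l := ExpPoly.sub_mem hf hFmem
  have hFderiv : ∀ j : ℕ, iteratedDeriv j F a
      = ∑ i : Fin (k+1), c i * iteratedDeriv ((i:ℕ) + j) Φ 0 := by
    intro j
    rw [hFdef]
    rw [combo_deriv hΦmem.1 c a j a]
    simp [sub_self]
  have hvan : ∀ j < l.length, iteratedDeriv j (fun x => f x - F x) a = 0 := by
    intro j hj
    rw [hl] at hj
    rw [iteratedDeriv_fun_subC hf.1 hFmem.1, hFderiv j]
    rcases Nat.lt_or_ge j (n - k) with h | h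
    · rw [h0 j h]
      have hterm : ∀ i : Fin (k+1), c i * iteratedDeriv ((i:ℕ) + j) Φ 0 = 0 := by
        intro i
        rw [hΦzero ((i:ℕ) + j) (by have := i.is_le; omega)]
        simp
      rw [Finset.sum_congr rfl (fun i _ => hterm i)]
      simp
    · have hj' : j - (n - k) < k + 1 := by omega
      set j' : Fin (k+1) := ⟨j - (n - k), hj'⟩ with hj'def
      have hjeq : (n - k) + (j' : ℕ) = j := by simp [hj'def]; omega
      have h1 := congrFun (congrArg (fun w => w) hsolve) j'
      have h2 : (A.mulVec c) j' = v j' := by rw [hsolve]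
      have h3 : (A.mulVec c) j' = ∑ i : Fin (k+1), c i * iteratedDeriv ((i:ℕ) + ((n-k) + j')) Φ 0 := by
        rw [Matrix.mulVec]
        simp [dotProduct, hA, mul_comm]
      rw [hv] at h2
      simp only [hjeq] at h2 h3
      rw [← h3, h2]
      simp
  have hzero : (fun x => f x - F x) = 0 := expPoly_unique l _ hg.1 hg.2 a hvan
  funext x
  have := congrFun hzero x
  have hsub : f x - F x = 0 := this
  have : f x = F x := by linear_combination hsub
  exact this

end Main

/-! ### chunk 4 : the two-point ⟷ determinant equivalence -/

section Main2

variable {n : ℕ} {l : List ℂ} {Φ : ℝ → ℂ}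

lemma dets_of_two_point (hl : l.length = n + 1)
    (hΦmem : Φ ∈ ExpPoly l) (hΦzero : ∀ j < n, iteratedDeriv j Φ 0 = 0)
    (hΦnorm : iteratedDeriv n Φ 0 = 1) (a b : ℝ)
    (hb : ∀ x ∈ Set.Ioc a b, IsExtChebyshev l {a, x}) :
    ∀ k ≤ n, ∀ x ∈ Set.Ioc a b,
      (Matrix.of fun i j : Fin (k + 1) =>
        iteratedDeriv ((i : ℕ) + (j : ℕ)) Φ (x - a)).det ≠ 0 := by
  classical
  intro k hk x hx hdet0
  obtain ⟨c, hc0, hmv⟩ := (Matrix.exists_mulVec_eq_zero_iff).mpr hdet0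
  set f : ℝ → ℂ := fun y => ∑ i : Fin (k+1), c i * iteratedDeriv (i:ℕ) Φ (y - a) with hfdef
  have hfmem : f ∈ ExpPoly l :=
    ExpPoly.sum_mem Finset.univ c _ (fun i _ =>
      ExpPoly.translate (ExpPoly.iteratedDeriv_mem hΦmem (i:ℕ)) a)
  -- f is nonzero
  have hcex : ∃ i, c i ≠ 0 := Function.ne_iff.mp hc0
  set T : Finset (Fin (k+1)) := Finset.univ.filter (fun i => c i ≠ 0) with hT
  have hTne : T.Nonempty := by
    obtain ⟨i, hi⟩ := hcex
    exact ⟨i, by simp [hT, hi]⟩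
  set i₀ : Fin (k+1) := T.max' hTne with hi₀
  have hci₀ : c i₀ ≠ 0 := by
    have := T.max'_mem hTne
    simpa [hT] using this
  have hle : ∀ i : Fin (k+1), i₀ < i → c i = 0 := by
    intro i hi
    by_contra hne
    have hiT : i ∈ T := by simp [hT, hne]
    exact absurd (T.le_max' i hiT) (not_le.mpr hi)
  have hval : iteratedDeriv (n - (i₀:ℕ)) f a = c i₀ := by
    rw [hfdef, combo_deriv hΦmem.1 c a (n - (i₀:ℕ)) a, sub_self]
    rw [Finset.sum_eq_single i₀]
    · have h1 : (i₀:ℕ) + (n - (i₀:ℕ)) = n := by have := i₀.is_le; omega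
      rw [h1, hΦnorm, mul_one]
    · intro i _ hne
      rcases lt_or_gt_of_ne hne with h | h
      · have hlt : (i:ℕ) < (i₀:ℕ) := h
        have hi₀n : (i₀:ℕ) ≤ n := le_trans i₀.is_le hk
        rw [hΦzero ((i:ℕ) + (n - (i₀:ℕ))) (by omega)]
        simp
      · rw [hle i h]; simp
    · intro h; exact absurd (Finset.mem_univ i₀) h
  have hfne : f ≠ 0 := by
    intro h
    rw [h] at hval
    have : iteratedDeriv (n - (i₀:ℕ)) (0 : ℝ → ℂ) a = 0 := by
      have := iteratedDeriv_zero_fun (n - (i₀:ℕ))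
      exact congrFun this a
    rw [this] at hval
    exact hci₀ hval.symm
  have hax : a ≠ x := ne_of_lt hx.1
  set s : Finset ℝ := {a, x} with hs
  set m : ℝ → ℕ := fun y => if y = a then n - k else if y = x then k + 1 else 0 with hm
  have hsub : (↑s : Set ℝ) ⊆ ({a, x} : Set ℝ) := by
    rw [hs]; simp
  have hvan : ∀ y ∈ s, ∀ j < m y, iteratedDeriv j f y = 0 := by
    intro y hy j hj
    rw [hs] at hy
    rcases Finset.mem_insert.mp hy with h | hy
    · -- y = a
      rw [h] at hj ⊢
      have hj' : j < n - k := by simpa [hm] using hj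
      rw [hfdef, combo_deriv hΦmem.1 c a j a, sub_self]
      apply Finset.sum_eq_zero
      intro i _
      rw [hΦzero ((i:ℕ) + j) (by have := i.is_le; omega)]
      simp
    · -- y = x
      have hyx : y = x := Finset.mem_singleton.mp hy
      rw [hyx] at hj ⊢
      have hxa : x ≠ a := fun h => hax h.symm
      have hj' : j < k + 1 := by simpa [hm, hxa] using hj
      rw [hfdef, combo_deriv hΦmem.1 c a j x]
      set jf : Fin (k+1) := ⟨j, hj'⟩ with hjf
      have hthis := congrFun hmv jf
      simp only [Matrix.mulVec, dotProduct, Pi.zero_apply] at hthis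
      rw [← hthis]
      apply Finset.sum_congr rfl
      intro i _
      have he : (Matrix.of fun p q : Fin (k+1) =>
          iteratedDeriv ((p:ℕ) + (q:ℕ)) Φ (x - a)) jf i
          = iteratedDeriv (j + (i:ℕ)) Φ (x - a) := rfl
      rw [he, Nat.add_comm j (i:ℕ), mul_comm]
  have hcheb := hb x hx f hfmem hfne s m hsub hvan
  rw [hl] at hcheb
  have hsum : ∑ y ∈ s, m y = n + 1 := by
    rw [hs, Finset.sum_insert (by simp [hax]), Finset.sum_singleton]
    have hxa : x ≠ a := fun h => hax h.symm
    simp [hm, hxa]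
    omega
  omega

lemma two_point_of_dets (hl : l.length = n + 1)
    (hΦmem : Φ ∈ ExpPoly l) (hΦzero : ∀ j < n, iteratedDeriv j Φ 0 = 0)
    (hΦnorm : iteratedDeriv n Φ 0 = 1) (a b : ℝ)
    (hdet : ∀ k ≤ n, ∀ x ∈ Set.Ioc a b,
      (Matrix.of fun i j : Fin (k + 1) =>
        iteratedDeriv ((i : ℕ) + (j : ℕ)) Φ (x - a)).det ≠ 0) :
    ∀ x ∈ Set.Ioc a b, IsExtChebyshev l {a, x} := by
  classical
  intro x hx f hfmem hfne s m hsub hvan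
  rw [hl]
  by_contra hgt
  push_neg at hgt
  have hax : a ≠ x := ne_of_lt hx.1
  have hssub : s ⊆ ({a, x} : Finset ℝ) := by
    intro y hy
    have := hsub hy
    simp only [Set.mem_insert_iff, Set.mem_singleton_iff] at this
    simp only [Finset.mem_insert, Finset.mem_singleton]
    exact this
  set ma : ℕ := if a ∈ s then m a else 0 with hma
  set mx : ℕ := if x ∈ s then m x else 0 with hmx
  have hsum : ∑ y ∈ s, m y ≤ ma + mx := by
    have h1 : ∑ y ∈ s, m y = ∑ y ∈ s, (if y ∈ s then m y else 0) := by
      apply Finset.sum_congr rfl; intro y hy; rw [if_pos hy]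
    have h2 : ∑ y ∈ s, (if y ∈ s then m y else 0)
        = ∑ y ∈ ({a, x} : Finset ℝ), (if y ∈ s then m y else 0) := by
      apply Finset.sum_subset hssub
      intro y _ hy; rw [if_neg hy]
    rw [h1, h2, Finset.sum_insert (by simp [hax]), Finset.sum_singleton]
  have htot : n + 1 ≤ ma + mx := by omega
  have hvana : ∀ j < ma, iteratedDeriv j f a = 0 := by
    intro j hj
    rw [hma] at hj
    by_cases h : a ∈ s
    · rw [if_pos h] at hj; exact hvan a h j hj
    · rw [if_neg h] at hj; omega
  have hvanx : ∀ j < mx, iteratedDeriv j f x = 0 := by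
    intro j hj
    rw [hmx] at hj
    by_cases h : x ∈ s
    · rw [if_pos h] at hj; exact hvan x h j hj
    · rw [if_neg h] at hj; omega
  have hmaln : ma ≤ n := by
    by_contra h
    push_neg at h
    apply hfne
    apply expPoly_unique l f hfmem.1 hfmem.2 a
    intro j hj
    exact hvana j (by rw [hl] at hj; omega)
  set k : ℕ := n - ma with hk
  have hkn : k ≤ n := by omega
  obtain ⟨c, hrep⟩ := span_lemma hl hΦmem hΦzero hΦnorm hfmem a hkn
    (fun j hj => hvana j (by omega))
  have hc0 : c ≠ 0 := by
    intro h
    apply hfne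
    rw [hrep, h]
    funext y; simp
  have hmv : (Matrix.of fun i j : Fin (k + 1) =>
      iteratedDeriv ((i : ℕ) + (j : ℕ)) Φ (x - a)).mulVec c = 0 := by
    funext j
    have h1 : iteratedDeriv (j:ℕ) f x = 0 := hvanx (j:ℕ) (by have := j.is_lt; omega)
    rw [hrep] at h1
    rw [combo_deriv hΦmem.1 c a (j:ℕ) x] at h1
    simp only [Matrix.mulVec, dotProduct, Pi.zero_apply]
    rw [← h1]
    apply Finset.sum_congr rfl
    intro i _
    have he : (Matrix.of fun p q : Fin (k+1) =>
        iteratedDeriv ((p:ℕ) + (q:ℕ)) Φ (x - a)) j i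
        = iteratedDeriv ((j:ℕ) + (i:ℕ)) Φ (x - a) := rfl
    rw [he, Nat.add_comm (j:ℕ) (i:ℕ), mul_comm]
  exact hdet k hkn x hx ((Matrix.exists_mulVec_eq_zero_iff).mp ⟨c, hc0, hmv⟩)

end Main2

/-! ### chunk 5 : Rolle with multiplicities -/

section Rolle

lemma rolle_mult (I : Set ℝ) (hI : I.OrdConnected) (φ : ℝ → ℝ)
    (hφd : ∀ x ∈ I, ContDiffAt ℝ (⊤:ℕ∞) φ x)
    (s : Finset ℝ) (hs : ↑s ⊆ I) (m : ℝ → ℕ)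
    (hvan : ∀ x ∈ s, ∀ j < m x, iteratedDeriv j φ x = 0) :
    ∃ (s' : Finset ℝ) (m' : ℝ → ℕ), (↑s' : Set ℝ) ⊆ I ∧
      (∀ x ∈ s', ∀ j < m' x, iteratedDeriv j (deriv φ) x = 0) ∧
      (∑ x ∈ s, m x) - 1 ≤ ∑ x ∈ s', m' x := by
  classical
  -- key claim for finsets of points with positive multiplicity
  have key : ∀ t : Finset ℝ, (↑t : Set ℝ) ⊆ I → (∀ x ∈ t, m x ≠ 0) →
      (∀ x ∈ t, ∀ j < m x, iteratedDeriv j φ x = 0) →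
      ∃ (s' : Finset ℝ) (m' : ℝ → ℕ), (↑s' : Set ℝ) ⊆ I ∧
        (∀ y ∈ s', ∃ x ∈ t, y ≤ x) ∧
        (∀ x ∈ s', ∀ j < m' x, iteratedDeriv j (deriv φ) x = 0) ∧
        (∑ x ∈ t, m x) - 1 ≤ ∑ x ∈ s', m' x := by
    intro t
    induction t using Finset.induction_on_max with
    | empty =>
      intro _ _ _
      exact ⟨∅, fun _ => 0, by simp, by simp, by simp, by simp⟩
    | insert a t hlt IH =>
      intro hsub hpos hv
      have haI : a ∈ I := hsub (by simp)
      have hanott : a ∉ t := fun h => lt_irrefl a (hlt a h)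
      have hsubt : (↑t : Set ℝ) ⊆ I := fun y hy => hsub (by simp [hy])
      have hpost : ∀ x ∈ t, m x ≠ 0 := fun x hx => hpos x (Finset.mem_insert_of_mem hx)
      have hvt : ∀ x ∈ t, ∀ j < m x, iteratedDeriv j φ x = 0 :=
        fun x hx => hv x (Finset.mem_insert_of_mem hx)
      have hvana : ∀ j < m a - 1, iteratedDeriv j (deriv φ) a = 0 := by
        intro j hj
        rw [← iteratedDeriv_succ']
        exact hv a (Finset.mem_insert_self a t) (j+1) (by omega)
      rcases t.eq_empty_or_nonempty with rfl | hne
      · refine ⟨{a}, fun y => if y = a then m a - 1 else 0, by simpa using haI, ?_, ?_, ?_⟩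
        · intro y hy
          exact ⟨a, by simp, le_of_eq (Finset.mem_singleton.mp hy)⟩
        · intro x hx j hj
          rw [Finset.mem_singleton.mp hx] at hj ⊢
          have hj' : j < m a - 1 := by simpa using hj
          exact hvana j hj'
        · simp
      · obtain ⟨s₀, m₀, hsub₀, hbd₀, hvan₀, hsum₀⟩ := IH hsubt hpost hvt
        set x₁ : ℝ := t.max' hne with hx₁
        have hx₁t : x₁ ∈ t := t.max'_mem hne
        have hx₁I : x₁ ∈ I := hsubt hx₁t
        have hx₁a : x₁ < a := hlt x₁ hx₁t
        have hIcc : Set.Icc x₁ a ⊆ I := hI.out hx₁I haI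
        have hφx₁ : φ x₁ = 0 := by
          have := hvt x₁ hx₁t 0 (Nat.pos_of_ne_zero (hpost x₁ hx₁t))
          simpa using this
        have hφa : φ a = 0 := by
          have := hv a (Finset.mem_insert_self a t) 0
            (Nat.pos_of_ne_zero (hpos a (Finset.mem_insert_self a t)))
          simpa using this
        have hcont : ContinuousOn φ (Set.Icc x₁ a) := fun y hy =>
          ((hφd y (hIcc hy)).continuousAt).continuousWithinAt
        have hdiff : ∀ y ∈ Set.Ioo x₁ a, DifferentiableAt ℝ φ y := fun y hy =>
          (hφd y (hIcc (Set.Ioo_subset_Icc_self hy))).differentiableAt one_le_inftop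
        obtain ⟨ξ, hξIoo, hξd⟩ := exists_deriv_eq_zero hx₁a hcont (hφx₁.trans hφa.symm)
        have hξI : ξ ∈ I := hIcc (Set.Ioo_subset_Icc_self hξIoo)
        have hbd₀' : ∀ y ∈ s₀, y ≤ x₁ := by
          intro y hy
          obtain ⟨x, hxt, hyx⟩ := hbd₀ y hy
          exact le_trans hyx (t.le_max' x hxt)
        have hξns₀ : ξ ∉ s₀ := fun h => absurd (hbd₀' ξ h) (not_le.mpr hξIoo.1)
        have hans : a ∉ insert ξ s₀ := by
          intro h
          rcases Finset.mem_insert.mp h with h | h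
          · have h2 : ξ < a := hξIoo.2
            rw [← h] at h2
            exact lt_irrefl a h2
          · have h2 := hbd₀' a h
            linarith [hx₁a]
        refine ⟨insert a (insert ξ s₀),
          fun y => if y = a then m a - 1 else if y = ξ then 1 else m₀ y, ?_, ?_, ?_, ?_⟩
        · intro y hy
          simp only [Finset.coe_insert, Set.mem_insert_iff] at hy
          rcases hy with rfl | rfl | hy
          · exact haI
          · exact hξI
          · exact hsub₀ hy
        · intro y hy
          simp only [Finset.mem_insert] at hy
          rcases hy with h | h | hy
          · exact ⟨a, Finset.mem_insert_self a t, le_of_eq h⟩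
          · exact ⟨a, Finset.mem_insert_self a t, h ▸ le_of_lt hξIoo.2⟩
          · exact ⟨a, Finset.mem_insert_self a t,
              le_of_lt (lt_of_le_of_lt (hbd₀' y hy) (lt_trans hξIoo.1 hξIoo.2))⟩
        · intro y hy j hj
          simp only [Finset.mem_insert] at hy
          rcases hy with h | h | hy
          · rw [h] at hj ⊢
            have hj' : j < m a - 1 := by simpa using hj
            exact hvana j hj'
          · rw [h] at hj ⊢
            have hξa : ξ ≠ a := ne_of_lt hξIoo.2
            have hj' : j < 1 := by simpa [hξa] using hj
            interval_cases j
            simpa using hξd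
          · have hya : y ≠ a := ne_of_lt (lt_of_le_of_lt (hbd₀' y hy)
              (lt_trans hξIoo.1 hξIoo.2))
            have hyξ : y ≠ ξ := ne_of_lt (lt_of_le_of_lt (hbd₀' y hy) hξIoo.1)
            have hj' : j < m₀ y := by simpa [hya, hyξ] using hj
            exact hvan₀ y hy j hj'
        · rw [Finset.sum_insert hans, Finset.sum_insert (fun h => hξns₀ h),
            Finset.sum_insert hanott]
          have hξa : ξ ≠ a := ne_of_lt hξIoo.2
          have e1 : (if a = a then m a - 1 else if a = ξ then 1 else m₀ a)
              = m a - 1 := if_pos rfl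
          have e2 : (if ξ = a then m a - 1 else if ξ = ξ then 1 else m₀ ξ)
              = 1 := by rw [if_neg hξa, if_pos rfl]
          have hcong : (∑ y ∈ s₀, if y = a then m a - 1 else if y = ξ then 1
                else m₀ y) = ∑ y ∈ s₀, m₀ y := by
            apply Finset.sum_congr rfl
            intro y hy
            have hya : y ≠ a := ne_of_lt (lt_of_le_of_lt (hbd₀' y hy)
              (lt_trans hξIoo.1 hξIoo.2))
            have hyξ : y ≠ ξ := ne_of_lt (lt_of_le_of_lt (hbd₀' y hy) hξIoo.1)
            simp [hya, hyξ]
          rw [e1, e2, hcong]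
          have hmapos : m a ≠ 0 := hpos a (Finset.mem_insert_self a t)
          omega
  -- reduce to the filtered finset
  set t : Finset ℝ := s.filter (fun x => m x ≠ 0) with ht
  have hsumt : ∑ x ∈ t, m x = ∑ x ∈ s, m x := Finset.sum_filter_ne_zero s
  obtain ⟨s', m', h1, _, h3, h4⟩ := key t
    (fun y hy => hs (by
      have : y ∈ t := hy
      rw [ht] at this
      exact Finset.coe_subset.mpr (Finset.filter_subset _ s) this))
    (fun x hx => (Finset.mem_filter.mp hx).2)
    (fun x hx => hvan x (Finset.mem_filter.mp hx).1)
  exact ⟨s', m', h1, h3, by omega⟩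

end Rolle

/-! ### chunk 6a : local Leibniz rule -/

section Leibniz

lemma infty_add_one : ((⊤:ℕ∞) : WithTop ℕ∞) + 1 ≤ ((⊤:ℕ∞) : WithTop ℕ∞) := by
  rw [show (((⊤:ℕ∞) : WithTop ℕ∞) + 1) = ((⊤:ℕ∞) : WithTop ℕ∞) from rfl]

lemma ContDiffOn.iteratedDeriv_isOpen {U : Set ℝ} (hU : IsOpen U) {f : ℝ → ℝ}
    (hf : ContDiffOn ℝ (⊤:ℕ∞) f U) (r : ℕ) :
    ContDiffOn ℝ (⊤:ℕ∞) (iteratedDeriv r f) U := by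
  induction r with
  | zero => simpa [iteratedDeriv_zero] using hf
  | succ r IH =>
    rw [iteratedDeriv_succ]
    exact IH.deriv_of_isOpen hU infty_add_one

lemma diffAt_iteratedDeriv_isOpen {U : Set ℝ} (hU : IsOpen U) {f : ℝ → ℝ}
    (hf : ContDiffOn ℝ (⊤:ℕ∞) f U) (r : ℕ) {x : ℝ} (hx : x ∈ U) :
    DifferentiableAt ℝ (iteratedDeriv r f) x :=
  ((hf.iteratedDeriv_isOpen hU r).contDiffAt (hU.mem_nhds hx)).differentiableAt one_le_inftop

lemma deriv_iteratedDeriv {f : ℝ → ℝ} (r : ℕ) (x : ℝ) :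
    deriv (iteratedDeriv r f) x = iteratedDeriv (r+1) f x :=
  (congrFun (iteratedDeriv_succ (n := r)) x).symm

lemma leibniz_local {U : Set ℝ} (hU : IsOpen U) {f g : ℝ → ℝ}
    (hf : ContDiffOn ℝ (⊤:ℕ∞) f U) (hg : ContDiffOn ℝ (⊤:ℕ∞) g U) :
    ∀ (i : ℕ), ∀ x ∈ U, iteratedDeriv i (fun y => f y * g y) x
      = ∑ r ∈ Finset.range (i+1),
          (i.choose r : ℝ) * (iteratedDeriv (i - r) f x * iteratedDeriv r g x) := by
  intro i
  induction i with
  | zero =>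
    intro x _
    simp
  | succ i IH =>
    intro x hx
    have hEq : Set.EqOn (iteratedDeriv i (fun y => f y * g y))
        (fun y => ∑ r ∈ Finset.range (i+1),
          (i.choose r : ℝ) * (iteratedDeriv (i - r) f y * iteratedDeriv r g y)) U :=
      fun y hy => IH y hy
    have h1 : iteratedDeriv (i+1) (fun y => f y * g y) x
        = deriv (fun y => ∑ r ∈ Finset.range (i+1),
          (i.choose r : ℝ) * (iteratedDeriv (i - r) f y * iteratedDeriv r g y)) x := by
      rw [iteratedDeriv_succ]
      exact Filter.EventuallyEq.deriv_eq
        (Filter.eventuallyEq_of_mem (hU.mem_nhds hx) hEq)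
    have hdiffterm : ∀ r : ℕ, DifferentiableAt ℝ
        (fun y => (i.choose r : ℝ) * (iteratedDeriv (i - r) f y * iteratedDeriv r g y)) x := by
      intro r
      exact (((diffAt_iteratedDeriv_isOpen hU hf (i-r) hx).mul
        (diffAt_iteratedDeriv_isOpen hU hg r hx)).const_mul _)
    have h2 : deriv (fun y => ∑ r ∈ Finset.range (i+1),
          (i.choose r : ℝ) * (iteratedDeriv (i - r) f y * iteratedDeriv r g y)) x
        = ∑ r ∈ Finset.range (i+1), (i.choose r : ℝ) *
            (iteratedDeriv (i - r + 1) f x * iteratedDeriv r g x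
              + iteratedDeriv (i - r) f x * iteratedDeriv (r + 1) g x) := by
      rw [deriv_fun_sum (fun r _ => hdiffterm r)]
      apply Finset.sum_congr rfl
      intro r _
      rw [deriv_const_mul _ ((diffAt_iteratedDeriv_isOpen hU hf (i-r) hx).fun_mul
        (diffAt_iteratedDeriv_isOpen hU hg r hx))]
      rw [deriv_fun_mul (diffAt_iteratedDeriv_isOpen hU hf (i-r) hx)
        (diffAt_iteratedDeriv_isOpen hU hg r hx)]
      rw [deriv_iteratedDeriv, deriv_iteratedDeriv]
    rw [h1, h2]
    -- now the combinatorial identity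
    have expand : ∀ r : ℕ, (i.choose r : ℝ) *
            (iteratedDeriv (i - r + 1) f x * iteratedDeriv r g x
              + iteratedDeriv (i - r) f x * iteratedDeriv (r + 1) g x)
        = (i.choose r : ℝ) * (iteratedDeriv (i - r + 1) f x * iteratedDeriv r g x)
          + (i.choose r : ℝ) * (iteratedDeriv (i - r) f x * iteratedDeriv (r + 1) g x) := by
      intro r; ring
    rw [Finset.sum_congr rfl (fun r _ => expand r), Finset.sum_add_distrib]
    set A : ℕ → ℝ := fun r => iteratedDeriv (i + 1 - r) f x * iteratedDeriv r g x with hA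
    have e1 : ∀ r ∈ Finset.range (i+1), (i.choose r : ℝ) *
        (iteratedDeriv (i - r + 1) f x * iteratedDeriv r g x) = (i.choose r : ℝ) * A r := by
      intro r hr
      have : i - r + 1 = i + 1 - r := by
        have := Finset.mem_range.mp hr; omega
      rw [hA, this]
    have e2 : ∀ r, (i.choose r : ℝ) *
        (iteratedDeriv (i - r) f x * iteratedDeriv (r+1) g x) = (i.choose r : ℝ) * A (r+1) := by
      intro r
      have : i - r = i + 1 - (r + 1) := by omega
      rw [hA, this]
    rw [Finset.sum_congr rfl e1, Finset.sum_congr rfl (fun r _ => e2 r)]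
    -- target : ∑_{r ∈ range (i+2)} C(i+1,r) A r
    have target_expand : ∑ r ∈ Finset.range (i+2), ((i+1).choose r : ℝ) * A r
        = A 0 + (∑ r ∈ Finset.range (i+1), (i.choose r : ℝ) * A (r+1)
            + ∑ r ∈ Finset.range (i+1), (i.choose (r+1) : ℝ) * A (r+1)) := by
      rw [Finset.sum_range_succ' (fun r => ((i+1).choose r : ℝ) * A r) (i+1)]
      have hch : ∀ r, (((i+1).choose (r+1) : ℕ) : ℝ)
          = (i.choose r : ℝ) + (i.choose (r+1) : ℝ) := by
        intro r
        rw [Nat.choose_succ_succ]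
        push_cast
        ring
      have : ∀ r ∈ Finset.range (i+1), ((i+1).choose (r+1) : ℝ) * A (r+1)
          = (i.choose r : ℝ) * A (r+1) + (i.choose (r+1) : ℝ) * A (r+1) := by
        intro r _
        rw [hch r]; ring
      rw [Finset.sum_congr rfl this, Finset.sum_add_distrib]
      simp [Nat.choose_zero_right]
      ring
    rw [target_expand]
    -- LHS first sum: ∑_{r ∈ range (i+1)} C(i,r) A r = A 0 + ∑_{r ∈ range i} C(i,r+1) A (r+1)
    have lhs1 : ∑ r ∈ Finset.range (i+1), (i.choose r : ℝ) * A r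
        = A 0 + ∑ r ∈ Finset.range i, (i.choose (r+1) : ℝ) * A (r+1) := by
      rw [Finset.sum_range_succ' (fun r => (i.choose r : ℝ) * A r) i]
      simp [Nat.choose_zero_right]
      ring
    have lhs2 : ∑ r ∈ Finset.range (i+1), (i.choose (r+1) : ℝ) * A (r+1)
        = ∑ r ∈ Finset.range i, (i.choose (r+1) : ℝ) * A (r+1) := by
      rw [Finset.sum_range_succ]
      simp [Nat.choose_succ_self]
    rw [lhs1, lhs2]
    ring

end Leibniz

/-! ### chunk 6b : Wronskian identity -/

section Wronskian

lemma iteratedDeriv_zero_funR (m : ℕ) : iteratedDeriv m (fun _ : ℝ => (0:ℝ)) = fun _ => 0 := by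
  induction m with
  | zero => simp
  | succ m IH =>
    rw [iteratedDeriv_succ']
    have : deriv (fun _ : ℝ => (0:ℝ)) = fun _ => (0:ℝ) := by funext x; simp
    rw [this]; exact IH

lemma iteratedDeriv_one_fun (r : ℕ) :
    iteratedDeriv r (fun _ : ℝ => (1:ℝ)) = fun _ => if r = 0 then (1:ℝ) else 0 := by
  cases r with
  | zero => simp
  | succ r =>
    rw [iteratedDeriv_succ']
    have : deriv (fun _ : ℝ => (1:ℝ)) = fun _ => (0:ℝ) := by funext x; simp
    rw [this, iteratedDeriv_zero_funR]
    simp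

lemma wronskian_step {U : Set ℝ} (hU : IsOpen U) (g : ℕ → ℝ → ℝ)
    (hg : ∀ j, ContDiffOn ℝ (⊤:ℕ∞) (g j) U) (hg0 : ∀ x ∈ U, g 0 x ≠ 0)
    (m : ℕ) {x : ℝ} (hx : x ∈ U) :
    (Matrix.of fun i j : Fin (m+2) => iteratedDeriv (i:ℕ) (g (j:ℕ)) x).det
      = (g 0 x)^(m+2) *
        (Matrix.of fun i j : Fin (m+1) => iteratedDeriv (i:ℕ)
          (fun y => deriv (fun z => g ((j:ℕ)+1) z / g 0 z) y) x).det := by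
  classical
  set φ : ℕ → ℝ → ℝ := fun j y => g j y / g 0 y with hφdef
  have hφ : ∀ j, ContDiffOn ℝ (⊤:ℕ∞) (φ j) U := fun j => (hg j).div (hg 0) hg0
  set L : Matrix (Fin (m+2)) (Fin (m+2)) ℝ :=
    Matrix.of (fun i r : Fin (m+2) =>
      (Nat.choose (i:ℕ) (r:ℕ) : ℝ) * iteratedDeriv ((i:ℕ) - (r:ℕ)) (g 0) x) with hL
  set P : Matrix (Fin (m+2)) (Fin (m+2)) ℝ :=
    Matrix.of (fun r j : Fin (m+2) => iteratedDeriv (r:ℕ) (φ (j:ℕ)) x) with hP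
  have hGLP : (Matrix.of fun i j : Fin (m+2) => iteratedDeriv (i:ℕ) (g (j:ℕ)) x) = L * P := by
    ext i j
    have hEq : Set.EqOn (g (j:ℕ)) (fun y => g 0 y * φ (j:ℕ) y) U := by
      intro y hy
      rw [hφdef]
      exact (mul_div_cancel₀ _ (hg0 y hy)).symm
    have h1 : iteratedDeriv (i:ℕ) (g (j:ℕ)) x
        = iteratedDeriv (i:ℕ) (fun y => g 0 y * φ (j:ℕ) y) x :=
      EqOn.iteratedDeriv_of_isOpen hU hEq (i:ℕ) hx
    have h2 := leibniz_local hU (hg 0) (hφ (j:ℕ)) (i:ℕ) x hx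
    have h3 : ∑ r ∈ Finset.range ((i:ℕ)+1),
          ((i:ℕ).choose r : ℝ) * (iteratedDeriv ((i:ℕ) - r) (g 0) x
            * iteratedDeriv r (φ (j:ℕ)) x)
        = ∑ r ∈ Finset.range (m+2),
          ((i:ℕ).choose r : ℝ) * (iteratedDeriv ((i:ℕ) - r) (g 0) x
            * iteratedDeriv r (φ (j:ℕ)) x) := by
      apply Finset.sum_subset
      · intro r hr
        simp only [Finset.mem_range] at hr ⊢
        have := i.is_lt
        omega
      · intro r _ hr
        simp only [Finset.mem_range, not_lt] at hr
        rw [Nat.choose_eq_zero_of_lt (by omega)]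
        simp
    have h4 : ∑ r ∈ Finset.range (m+2),
          ((i:ℕ).choose r : ℝ) * (iteratedDeriv ((i:ℕ) - r) (g 0) x
            * iteratedDeriv r (φ (j:ℕ)) x)
        = ∑ r : Fin (m+2),
          ((i:ℕ).choose (r:ℕ) : ℝ) * (iteratedDeriv ((i:ℕ) - (r:ℕ)) (g 0) x
            * iteratedDeriv (r:ℕ) (φ (j:ℕ)) x) := by
      rw [Finset.sum_range]
    show iteratedDeriv (i:ℕ) (g (j:ℕ)) x = ∑ r : Fin (m+2), L i r * P r j
    rw [h1, h2, h3, h4]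
    apply Finset.sum_congr rfl
    intro r _
    rw [hL, hP]
    simp only [Matrix.of_apply]
    ring
  have hLtri : L.BlockTriangular OrderDual.toDual := by
    intro p q hpq
    have h : p < q := hpq
    have h' : (p:ℕ) < (q:ℕ) := h
    rw [hL]
    simp only [Matrix.of_apply]
    rw [Nat.choose_eq_zero_of_lt h']
    simp
  have hdetL : L.det = (g 0 x)^(m+2) := by
    rw [Matrix.det_of_lowerTriangular L hLtri]
    have : ∀ p : Fin (m+2), L p p = g 0 x := by
      intro p
      rw [hL]
      simp only [Matrix.of_apply]
      rw [Nat.choose_self, Nat.sub_self]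
      simp [iteratedDeriv_zero]
    rw [Finset.prod_congr rfl (fun p _ => this p)]
    simp
  -- first column of P
  have hPcol : ∀ r : Fin (m+2), P r 0 = if (r:ℕ) = 0 then 1 else 0 := by
    intro r
    have hEq1 : Set.EqOn (φ 0) (fun _ => (1:ℝ)) U := by
      intro y hy
      rw [hφdef]
      exact div_self (hg0 y hy)
    have h1 : iteratedDeriv (r:ℕ) (φ 0) x = iteratedDeriv (r:ℕ) (fun _ => (1:ℝ)) x :=
      EqOn.iteratedDeriv_of_isOpen hU hEq1 (r:ℕ) hx
    rw [hP]
    simp only [Matrix.of_apply]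
    have hz : ((0 : Fin (m+2)) : ℕ) = 0 := rfl
    rw [hz, h1, iteratedDeriv_one_fun]
  have hdetP : P.det = (Matrix.of fun i j : Fin (m+1) => iteratedDeriv (i:ℕ)
      (fun y => deriv (fun z => g ((j:ℕ)+1) z / g 0 z) y) x).det := by
    rw [Matrix.det_succ_column_zero]
    rw [Finset.sum_eq_single (0 : Fin (m+2))]
    · have h00 : P 0 0 = 1 := by rw [hPcol 0]; norm_num
      rw [h00, mul_one]
      have hsub : (P.submatrix (Fin.succAbove 0) Fin.succ)
          = Matrix.of (fun i j : Fin (m+1) => iteratedDeriv ((i:ℕ)+1) (φ ((j:ℕ)+1)) x) := by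
        ext i j
        have h1 : (Fin.succAbove 0 i) = i.succ := by
          rw [Fin.succAbove_zero]
        rw [Matrix.submatrix_apply, h1]
        rw [hP]
        simp only [Matrix.of_apply, Fin.val_succ]
      rw [hsub]
      have hentry : ∀ i j : Fin (m+1), iteratedDeriv ((i:ℕ)+1) (φ ((j:ℕ)+1)) x
          = iteratedDeriv (i:ℕ) (fun y => deriv (fun z => g ((j:ℕ)+1) z / g 0 z) y) x := by
        intro i j
        rw [iteratedDeriv_succ']
      simp only [Fin.val_zero, pow_zero, one_mul]
      congr 1
      ext i j
      simp only [Matrix.of_apply]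
      exact hentry i j
    · intro i _ hne
      rw [hPcol i]
      have : (i:ℕ) ≠ 0 := fun h => hne (Fin.ext h)
      rw [if_neg this]
      simp
    · intro h
      exact absurd (Finset.mem_univ _) h
  rw [hGLP, Matrix.det_mul, hdetL, hdetP]
end Wronskian

/-! ### chunk 6c : extended Chebyshev property from nonvanishing Wronskians -/

section ECT

lemma ect : ∀ (N : ℕ) (U : Set ℝ), IsOpen U → ∀ (I : Set ℝ), I.OrdConnected → I ⊆ U →
    ∀ (g : ℕ → ℝ → ℝ), (∀ j, ContDiffOn ℝ (⊤:ℕ∞) (g j) U) →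
    (∀ q ≤ N, ∀ x ∈ I, (Matrix.of fun i j : Fin (q+1) =>
        iteratedDeriv (i:ℕ) (g (j:ℕ)) x).det ≠ 0) →
    ∀ (γ : ℕ → ℝ), (∃ i ≤ N, γ i ≠ 0) →
    ∀ (s : Finset ℝ), (↑s : Set ℝ) ⊆ I → ∀ (m : ℝ → ℕ),
    (∀ x ∈ s, ∀ j < m x, iteratedDeriv j
        (fun y => ∑ i ∈ Finset.range (N+1), γ i * g i y) x = 0) →
    ∑ x ∈ s, m x ≤ N := by
  intro N
  induction N with
  | zero =>
    intro U hU I hI hIU g hg hW γ hγ s hs m hvan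
    by_contra hgt
    push_neg at hgt
    have hex : ∃ x ∈ s, m x ≠ 0 := by
      by_contra h
      push_neg at h
      rw [Finset.sum_eq_zero h] at hgt
      omega
    obtain ⟨x, hxs, hmx⟩ := hex
    have hγ0 : γ 0 ≠ 0 := by
      obtain ⟨i, hi, hne⟩ := hγ
      have : i = 0 := by omega
      rwa [this] at hne
    have hg0 : g 0 x ≠ 0 := by
      have h1 := hW 0 le_rfl x (hs hxs)
      rw [Matrix.det_fin_one] at h1
      simpa using h1
    have hval := hvan x hxs 0 (by omega)
    rw [iteratedDeriv_zero] at hval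
    rw [Finset.sum_range_one] at hval
    exact mul_ne_zero hγ0 hg0 hval
  | succ N IH =>
    intro U hU I hI hIU g hg hW γ hγ s hs m hvan
    by_contra hgt
    push_neg at hgt
    have hdet1 : ∀ x : ℝ, (Matrix.of fun i j : Fin 1 =>
        iteratedDeriv (i:ℕ) (g (j:ℕ)) x).det = g 0 x := by
      intro x
      rw [Matrix.det_fin_one]
      simp
    have hg0I : ∀ x ∈ I, g 0 x ≠ 0 := by
      intro x hx
      have := hW 0 (by omega) x hx
      rwa [hdet1 x] at this
    set U' : Set ℝ := {y | y ∈ U ∧ g 0 y ≠ 0} with hU'def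
    have hU' : IsOpen U' := by
      apply isOpen_iff_mem_nhds.mpr
      rintro y ⟨hyU, hyne⟩
      have hcont : ContinuousAt (g 0) y :=
        ((hg 0).contDiffAt (hU.mem_nhds hyU)).continuousAt
      have h1 : ∀ᶠ z in 𝓝 y, g 0 z ≠ 0 := hcont.eventually_ne hyne
      filter_upwards [hU.mem_nhds hyU, h1] with z hz1 hz2
      exact ⟨hz1, hz2⟩
    have hU'U : U' ⊆ U := fun y hy => hy.1
    have hIU' : I ⊆ U' := fun y hy => ⟨hIU hy, hg0I y hy⟩
    set u : ℝ → ℝ := fun y => ∑ i ∈ Finset.range (N+1+1), γ i * g i y with hu_def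
    have hu : ContDiffOn ℝ (⊤:ℕ∞) u U := by
      apply ContDiffOn.sum
      intro i _
      exact contDiffOn_const.mul (hg i)
    set ψ : ℝ → ℝ := fun y => u y / g 0 y with hψ_def
    have hψ : ContDiffOn ℝ (⊤:ℕ∞) ψ U' :=
      (hu.mono hU'U).div ((hg 0).mono hU'U) (fun y hy => hy.2)
    have hEqOn_u : Set.EqOn u (fun y => g 0 y * ψ y) U' := by
      intro y hy
      rw [hψ_def]
      exact (mul_div_cancel₀ _ hy.2).symm
    -- ψ inherits the zeros of u
    have hψvan : ∀ x ∈ s, ∀ j < m x, iteratedDeriv j ψ x = 0 := by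
      intro x hxs
      have hxU' : x ∈ U' := hIU' (hs hxs)
      have main : ∀ j, j < m x → iteratedDeriv j ψ x = 0 := by
        intro j
        induction j using Nat.strong_induction_on with
        | _ j IHj =>
          intro hj
          have h1 : iteratedDeriv j u x = 0 := hvan x hxs j hj
          have h2 : iteratedDeriv j u x = iteratedDeriv j (fun y => g 0 y * ψ y) x :=
            EqOn.iteratedDeriv_of_isOpen hU' hEqOn_u j hxU'
          have h3 := leibniz_local hU' ((hg 0).mono hU'U) hψ j x hxU'
          rw [Finset.sum_range_succ] at h3
          have hzero : ∀ r ∈ Finset.range j, (j.choose r : ℝ) *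
              (iteratedDeriv (j - r) (g 0) x * iteratedDeriv r ψ x) = 0 := by
            intro r hr
            rw [IHj r (Finset.mem_range.mp hr) (by have := Finset.mem_range.mp hr; omega)]
            ring
          rw [Finset.sum_eq_zero hzero, zero_add, Nat.choose_self, Nat.sub_self,
            iteratedDeriv_zero] at h3
          rw [h2, h3] at h1
          have h4 : g 0 x * iteratedDeriv j ψ x = 0 := by
            have := h1
            simpa using this
          exact (mul_eq_zero.mp h4).resolve_left hxU'.2
      exact main
    -- Rolle
    obtain ⟨s', m', hs'I, hvan', hsum'⟩ := rolle_mult I hI ψ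
      (fun y hy => hψ.contDiffAt (hU'.mem_nhds (hIU' hy))) s hs m hψvan
    have hsum'' : N + 1 ≤ ∑ x ∈ s', m' x := by omega
    -- derived system
    set h : ℕ → ℝ → ℝ := fun j y => deriv (fun z => g (j+1) z / g 0 z) y with hh_def
    have hφi : ∀ i : ℕ, ContDiffOn ℝ (⊤:ℕ∞) (fun z => g i z / g 0 z) U' :=
      fun i => ((hg i).mono hU'U).div ((hg 0).mono hU'U) (fun y hy => hy.2)
    have hh : ∀ j, ContDiffOn ℝ (⊤:ℕ∞) (h j) U' := by
      intro j
      have := (hφi (j+1)).deriv_of_isOpen hU' infty_add_one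
      exact this
    have hW' : ∀ q ≤ N, ∀ x ∈ I, (Matrix.of fun i j : Fin (q+1) =>
        iteratedDeriv (i:ℕ) (h (j:ℕ)) x).det ≠ 0 := by
      intro q hq x hxI
      have hws := wronskian_step hU' g (fun j => (hg j).mono hU'U)
        (fun y hy => hy.2) q (hIU' hxI)
      have hne := hW (q+1) (by omega) x hxI
      rw [hws] at hne
      intro hzz
      apply hne
      rw [show (Matrix.of fun i j : Fin (q+1) => iteratedDeriv (i:ℕ)
        (fun y => deriv (fun z => g ((j:ℕ)+1) z / g 0 z) y) x).det = 0 from hzz]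
      ring
    by_cases hcase : ∃ i ≤ N, γ (i+1) ≠ 0
    · obtain ⟨i₀, hi₀, hγne⟩ := hcase
      -- derivative of ψ equals the derived combination
      have hEqd : Set.EqOn (deriv ψ)
          (fun y => ∑ i ∈ Finset.range (N+1), γ (i+1) * h i y) U' := by
        intro y hy
        have hdφ : ∀ i : ℕ, DifferentiableAt ℝ (fun z => g i z / g 0 z) y :=
          fun i => ((hφi i).contDiffAt (hU'.mem_nhds hy)).differentiableAt one_le_inftop
        have hψeq : Set.EqOn ψ
            (fun z => ∑ i ∈ Finset.range (N+1+1), γ i * (g i z / g 0 z)) U' := by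
          intro z hz
          rw [hψ_def, hu_def]
          simp only
          rw [Finset.sum_div]
          apply Finset.sum_congr rfl
          intro i _
          rw [mul_div_assoc]
        have h1 : deriv ψ y
            = deriv (fun z => ∑ i ∈ Finset.range (N+1+1), γ i * (g i z / g 0 z)) y :=
          Filter.EventuallyEq.deriv_eq
            (Filter.eventuallyEq_of_mem (hU'.mem_nhds hy) hψeq)
        rw [h1, deriv_fun_sum (fun i _ => (hdφ i).const_mul (γ i))]
        have h2 : ∀ i ∈ Finset.range (N+1+1),
            deriv (fun z => γ i * (g i z / g 0 z)) y
              = γ i * deriv (fun z => g i z / g 0 z) y := by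
          intro i _
          exact deriv_const_mul (γ i) (hdφ i)
        rw [Finset.sum_congr rfl h2, Finset.sum_range_succ'
          (fun i => γ i * deriv (fun z => g i z / g 0 z) y) (N+1)]
        have h3 : deriv (fun z => g 0 z / g 0 z) y = 0 := by
          have hEq1 : Set.EqOn (fun z => g 0 z / g 0 z) (fun _ => (1:ℝ)) U' := by
            intro z hz
            exact div_self hz.2
          have := Filter.EventuallyEq.deriv_eq
            (Filter.eventuallyEq_of_mem (hU'.mem_nhds hy) hEq1)
          rw [this]
          simp
        rw [h3, mul_zero, add_zero]
      have hvanv : ∀ x ∈ s', ∀ j < m' x, iteratedDeriv j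
          (fun y => ∑ i ∈ Finset.range (N+1), γ (i+1) * h i y) x = 0 := by
        intro x hxs' j hj
        have hxU' : x ∈ U' := hIU' (hs'I hxs')
        have heq := EqOn.iteratedDeriv_of_isOpen hU' hEqd j hxU'
        rw [← heq]
        exact hvan' x hxs' j hj
      have := IH U' hU' I hI hIU' h hh hW' (fun i => γ (i+1))
        ⟨i₀, hi₀, hγne⟩ s' hs'I m' hvanv
      omega
    · push_neg at hcase
      have hγ0 : γ 0 ≠ 0 := by
        obtain ⟨i, hi, hne⟩ := hγ
        rcases Nat.eq_zero_or_pos i with h0 | h0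
        · rwa [h0] at hne
        · obtain ⟨i', rfl⟩ := Nat.exists_eq_succ_of_ne_zero h0.ne'
          exact absurd (hcase i' (by omega)) hne
      have hex : ∃ x ∈ s, m x ≠ 0 := by
        by_contra h
        push_neg at h
        rw [Finset.sum_eq_zero h] at hgt
        omega
      obtain ⟨x, hxs, hmx⟩ := hex
      have hval : ∑ i ∈ Finset.range (N+1+1), γ i * g i x = 0 := by
        have hv := hvan x hxs 0 (by omega)
        rw [iteratedDeriv_zero] at hv
        exact hv
      rw [Finset.sum_range_succ' (fun i => γ i * g i x) (N+1)] at hval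
      have hz : ∀ i ∈ Finset.range (N+1), γ (i+1) * g (i+1) x = 0 := by
        intro i hi
        rw [hcase i (by have := Finset.mem_range.mp hi; omega)]
        ring
      rw [Finset.sum_eq_zero hz, zero_add] at hval
      exact mul_ne_zero hγ0 (hg0I x (hs hxs)) hval

end ECT

/-! ### chunk 7 : (c) implies (a), and the main theorem -/

section Final

lemma iteratedDeriv_cmulR {c : ℝ} {f : ℝ → ℝ} (hf : ContDiff ℝ (⊤:ℕ∞) f) (m : ℕ) (x : ℝ) :
    iteratedDeriv m (fun y => c * f y) x = c * iteratedDeriv m f x := by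
  have h0 : (fun y => c * f y) = c • f := by funext y; simp [smul_eq_mul]
  rw [h0, ← iteratedDerivWithin_univ, ← iteratedDerivWithin_univ,
    iteratedDerivWithin_const_smul (Set.mem_univ x) uniqueDiffOn_univ c
      (hf.of_le (nat_le_inftop m)).contDiffWithinAt]
  simp

lemma iteratedDeriv_fun_addR {f g : ℝ → ℝ} (hf : ContDiff ℝ (⊤:ℕ∞) f)
    (hg : ContDiff ℝ (⊤:ℕ∞) g) (m : ℕ) (x : ℝ) :
    iteratedDeriv m (fun y => f y + g y) x = iteratedDeriv m f x + iteratedDeriv m g x := by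
  have : (fun y => f y + g y) = f + g := rfl
  rw [this, ← iteratedDerivWithin_univ, ← iteratedDerivWithin_univ, ← iteratedDerivWithin_univ,
    iteratedDerivWithin_add (Set.mem_univ x) uniqueDiffOn_univ
      (hf.of_le (nat_le_inftop m)).contDiffWithinAt (hg.of_le (nat_le_inftop m)).contDiffWithinAt]

lemma iteratedDeriv_sumR {ι : Type*} (s : Finset ι) (c : ι → ℝ) (F : ι → ℝ → ℝ)
    (hF : ∀ i ∈ s, ContDiff ℝ (⊤:ℕ∞) (F i)) (m : ℕ) (x : ℝ) :
    iteratedDeriv m (fun y => ∑ i ∈ s, c i * F i y) x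
      = ∑ i ∈ s, c i * iteratedDeriv m (F i) x := by
  classical
  induction s using Finset.induction with
  | empty => simp [iteratedDeriv_zero_funR]
  | insert a s hni IH =>
    have hsum : ContDiff ℝ (⊤:ℕ∞) (fun y => ∑ i ∈ s, c i * F i y) := by
      apply ContDiff.sum
      intro i hi
      exact (hF i (Finset.mem_insert_of_mem hi)).const_smul (c i)
    have h1 : (fun y => ∑ i ∈ insert a s, c i * F i y)
        = fun y => c a * F a y + ∑ i ∈ s, c i * F i y := by
      funext y; rw [Finset.sum_insert hni]
    have hfa : ContDiff ℝ (⊤:ℕ∞) (fun y => c a * F a y) :=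
      (hF a (Finset.mem_insert_self a s)).const_smul (c a)
    rw [h1, iteratedDeriv_fun_addR hfa hsum,
      iteratedDeriv_cmulR (hF a (Finset.mem_insert_self a s)),
      IH (fun i hi => hF i (Finset.mem_insert_of_mem hi)), Finset.sum_insert hni]

variable {n : ℕ} {l : List ℂ} {Φ : ℝ → ℂ}

lemma icc_of_dets (hl : l.length = n + 1) (hconj : ConjClosed l)
    (hΦmem : Φ ∈ ExpPoly l) (hΦzero : ∀ j < n, iteratedDeriv j Φ 0 = 0)
    (hΦnorm : iteratedDeriv n Φ 0 = 1) (a b : ℝ) (hab : a < b)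
    (hdet : ∀ k ≤ n, ∀ x ∈ Set.Ioc a b,
      (Matrix.of fun i j : Fin (k + 1) =>
        iteratedDeriv ((i : ℕ) + (j : ℕ)) Φ (x - a)).det ≠ 0) :
    IsExtChebyshev l (Set.Icc a b) := by
  classical
  have hreal := phi_conj hl hconj hΦmem hΦzero hΦnorm
  intro f hfmem hfne s m hs hvan
  rw [hl]
  set ma : ℕ := if a ∈ s then m a else 0 with hma
  have hvana : ∀ j < ma, iteratedDeriv j f a = 0 := by
    intro j hj
    rw [hma] at hj
    by_cases h : a ∈ s
    · rw [if_pos h] at hj; exact hvan a h j hj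
    · rw [if_neg h] at hj; omega
  have hmaln : ma ≤ n := by
    by_contra h
    push_neg at h
    apply hfne
    apply expPoly_unique l f hfmem.1 hfmem.2 a
    intro j hj
    exact hvana j (by rw [hl] at hj; omega)
  set k : ℕ := n - ma with hk
  have hkn : k ≤ n := by omega
  obtain ⟨c, hrep⟩ := span_lemma hl hΦmem hΦzero hΦnorm hfmem a hkn
    (fun j hj => hvana j (by omega))
  have hc0 : c ≠ 0 := by
    intro h
    apply hfne
    rw [hrep, h]
    funext y; simp
  set s' : Finset ℝ := s.erase a with hs'
  have hs'sub : (↑s' : Set ℝ) ⊆ Set.Ioc a b := by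
    intro y hy
    have hy' : y ∈ s.erase a := hy
    have hyne : y ≠ a := Finset.ne_of_mem_erase hy'
    have hyIcc : y ∈ Set.Icc a b := hs (Finset.mem_of_mem_erase hy')
    exact ⟨lt_of_le_of_ne hyIcc.1 (Ne.symm hyne), hyIcc.2⟩
  have hsplit : ∑ y ∈ s, m y ≤ ma + ∑ y ∈ s', m y := by
    by_cases h : a ∈ s
    · rw [hma, if_pos h, hs']
      rw [← Finset.add_sum_erase s m h]
    · rw [hma, if_neg h, hs', Finset.erase_eq_of_notMem h]
      omega
  -- real system
  set D : ℕ → ℝ → ℝ := fun i y => (iteratedDeriv i Φ (y - a)).re with hD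
  have hDsmooth : ∀ i, ContDiff ℝ (⊤:ℕ∞) (D i) := by
    intro i
    exact (Complex.reCLM.contDiff).comp (phi_smooth_shift hΦmem.1 i a)
  have hDval : ∀ i j : ℕ, ∀ x : ℝ,
      iteratedDeriv j (D i) x = (iteratedDeriv (i + j) Φ (x - a)).re := by
    intro i j x
    have h1 : D i = fun y => ((fun z => iteratedDeriv i Φ (z - a)) y).re := rfl
    rw [h1, iteratedDeriv_re (phi_smooth_shift hΦmem.1 i a) j]
    rw [phi_shift_deriv Φ i j a]
  have hof : ∀ (r : ℕ) (t : ℝ),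
      ((iteratedDeriv r Φ t).re : ℂ) = iteratedDeriv r Φ t := by
    intro r t
    exact Complex.conj_eq_iff_re.mp (hreal r t)
  have him : ∀ (r : ℕ) (t : ℝ), (iteratedDeriv r Φ t).im = 0 := by
    intro r t
    exact Complex.conj_eq_iff_im.mp (hreal r t)
  -- Wronskian hypothesis for the real system
  have hW : ∀ q ≤ k, ∀ x ∈ Set.Ioc a b, (Matrix.of fun i j : Fin (q+1) =>
      iteratedDeriv (i:ℕ) (D (j:ℕ)) x).det ≠ 0 := by
    intro q hq x hx
    set Nmat : Matrix (Fin (q+1)) (Fin (q+1)) ℝ :=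
      Matrix.of (fun i j : Fin (q+1) => (iteratedDeriv ((i:ℕ) + (j:ℕ)) Φ (x - a)).re)
      with hNmat
    have hMeq : (Matrix.of fun i j : Fin (q+1) =>
        iteratedDeriv (i:ℕ) (D (j:ℕ)) x) = Nmat := by
      ext i j
      rw [hNmat]
      simp only [Matrix.of_apply]
      rw [hDval (j:ℕ) (i:ℕ) x, Nat.add_comm (j:ℕ) (i:ℕ)]
    have hmap : (algebraMap ℝ ℂ).mapMatrix Nmat = Matrix.of (fun i j : Fin (q+1) =>
        iteratedDeriv ((i:ℕ) + (j:ℕ)) Φ (x - a)) := by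
      ext i j
      simp only [RingHom.mapMatrix_apply, Matrix.map_apply, Matrix.of_apply, hNmat]
      exact hof _ _
    have hdetM := hdet q (le_trans hq hkn) x hx
    rw [← hmap] at hdetM
    rw [← RingHom.map_det] at hdetM
    have hNdet : Nmat.det ≠ 0 := by
      intro h
      apply hdetM
      rw [h]
      simp
    rw [hMeq]
    exact hNdet
  -- the coefficients
  set γR : ℕ → ℝ := fun i => if h : i < k + 1 then (c ⟨i, h⟩).re else 0 with hγR
  set γI : ℕ → ℝ := fun i => if h : i < k + 1 then (c ⟨i, h⟩).im else 0 with hγI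
  -- vanishing of both real combinations on s'
  have hvanb : ∀ (γ : ℕ → ℝ), (∀ i : Fin (k+1), γ (i:ℕ) = (c i).re) ∨
      (∀ i : Fin (k+1), γ (i:ℕ) = (c i).im) →
      ∀ x ∈ s', ∀ j < m x, iteratedDeriv j
        (fun y => ∑ i ∈ Finset.range (k+1), γ i * D i y) x = 0 := by
    intro γ hγalt x hxs' j hj
    have hxs : x ∈ s := Finset.mem_of_mem_erase hxs'
    have hfx : iteratedDeriv j f x = 0 := hvan x hxs j hj
    rw [hrep, combo_deriv hΦmem.1 c a j x] at hfx
    have hsum : iteratedDeriv j (fun y => ∑ i ∈ Finset.range (k+1), γ i * D i y) x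
        = ∑ i ∈ Finset.range (k+1), γ i * iteratedDeriv j (D i) x :=
      iteratedDeriv_sumR (Finset.range (k+1)) γ D (fun i _ => hDsmooth i) j x
    rw [hsum, Finset.sum_range (fun i => γ i * iteratedDeriv j (D i) x)]
    rcases hγalt with hRe | hIm
    · have hre := congrArg Complex.re hfx
      rw [Complex.re_sum] at hre
      simp only [Complex.zero_re] at hre
      rw [← hre]
      apply Finset.sum_congr rfl
      intro i _
      rw [hRe i, hDval (i:ℕ) j x]
      rw [Complex.mul_re, him ((i:ℕ) + j) (x - a)]
      ring
    · have hre := congrArg Complex.im hfx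
      rw [Complex.im_sum] at hre
      simp only [Complex.zero_im] at hre
      rw [← hre]
      apply Finset.sum_congr rfl
      intro i _
      rw [hIm i, hDval (i:ℕ) j x]
      rw [Complex.mul_im, him ((i:ℕ) + j) (x - a)]
      ring
  -- choose the nonzero coefficient vector
  obtain ⟨i₀, hci₀⟩ : ∃ i, c i ≠ 0 := Function.ne_iff.mp hc0
  have hγRval : ∀ i : Fin (k+1), γR (i:ℕ) = (c i).re := by
    intro i
    rw [hγR]
    simp only [dif_pos i.is_lt]
  have hγIval : ∀ i : Fin (k+1), γI (i:ℕ) = (c i).im := by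
    intro i
    rw [hγI]
    simp only [dif_pos i.is_lt]
  have hcount : ∑ y ∈ s', m y ≤ k := by
    rcases (by
      by_contra h
      push_neg at h
      exact hci₀ (Complex.ext h.1 h.2) : (c i₀).re ≠ 0 ∨ (c i₀).im ≠ 0) with hne | hne
    · exact ect k Set.univ isOpen_univ (Set.Ioc a b) Set.ordConnected_Ioc
        (Set.subset_univ _) D (fun j => (hDsmooth j).contDiffOn) hW γR
        ⟨(i₀:ℕ), by have := i₀.is_le; omega, by rw [hγRval i₀]; exact hne⟩
        s' hs'sub m (hvanb γR (Or.inl hγRval))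
    · exact ect k Set.univ isOpen_univ (Set.Ioc a b) Set.ordConnected_Ioc
        (Set.subset_univ _) D (fun j => (hDsmooth j).contDiffOn) hW γI
        ⟨(i₀:ℕ), by have := i₀.is_le; omega, by rw [hγIval i₀]; exact hne⟩
        s' hs'sub m (hvanb γI (Or.inr hγIval))
  omega

end Final


/-- **Theorem (extended Chebyshev systems over an interval).**
Let `Λ = (λ_0,…,λ_n) ∈ ℂ^{n+1}`, assume `E_Λ` is closed under complex conjugation,
and let `Φ` be the fundamental function of `E_Λ`.  For real numbers `a < b` the
following are equivalent:
(a) `E_Λ` is an extended Chebyshev system over the interval `[a,b]`;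
(b) `E_Λ` is an extended Chebyshev system for every two-point set `{a,x}`, `x ∈ (a,b]`;
(c) for each `k = 0,…,n` the function `x ↦ Φ_{n,k}(x − a)` has no zero in `(a,b]`. -/
theorem extChebyshev_interval_characterization
    (n : ℕ) (l : List ℂ) (hl : l.length = n + 1)
    (hconj : ConjClosed l)
    (a b : ℝ) (hab : a < b) (Φ : ℝ → ℂ)
    (hΦmem : Φ ∈ ExpPoly l)
    (hΦzero : ∀ j < n, iteratedDeriv j Φ 0 = 0)
    (hΦnorm : iteratedDeriv n Φ 0 = 1) :
    (IsExtChebyshev l (Set.Icc a b) ↔ ∀ x ∈ Set.Ioc a b, IsExtChebyshev l {a, x}) ∧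
    ((∀ x ∈ Set.Ioc a b, IsExtChebyshev l {a, x}) ↔
      ∀ k ≤ n, ∀ x ∈ Set.Ioc a b,
        Matrix.det (Matrix.of fun i j : Fin (k + 1) =>
          iteratedDeriv ((i : ℕ) + (j : ℕ)) Φ (x - a)) ≠ 0) := by
  have mono : IsExtChebyshev l (Set.Icc a b) → ∀ x ∈ Set.Ioc a b, IsExtChebyshev l {a, x} := by
    intro ha x hx f hf hfne s m hs hvan
    apply ha f hf hfne s m ?_ hvan
    intro y hy
    rcases hs hy with h | h
    · rw [h]; exact ⟨le_refl a, le_of_lt hab⟩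
    · rw [Set.mem_singleton_iff.mp h]; exact ⟨le_of_lt hx.1, hx.2⟩
  have bc := dets_of_two_point hl hΦmem hΦzero hΦnorm a b
  have cb := two_point_of_dets hl hΦmem hΦzero hΦnorm a b
  have ca := icc_of_dets hl hconj hΦmem hΦzero hΦnorm a b hab
  exact ⟨⟨mono, fun hb => ca (bc hb)⟩, ⟨bc, cb⟩⟩
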